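/- Let A be a flat of the Catalan matroid C_n of rank n − 2, and let x be the smallest integer with ht_A(x) = −1. Then the number of flats of C_n of rank n − 1 that contain A is exactly (x + 3)/2. -/
import Mathlib


/-- Height of the path with up-step set `A` after `x` steps: `2·|A ∩ {1,…,x}| − x`. -/
def ht (A : Finset ℕ) (x : ℕ) : ℤ := 2 * (A ∩ Finset.Icc 1 x).card - x

/-- `P` is the up-step set of a Dyck path of length `2n`. -/
def IsDyck (n : ℕ) (P : Finset ℕ) : Prop :=
  P ⊆ Finset.Icc 1 (2 * n) ∧ P.card = n ∧ ∀ x ≤ 2 * n, 0 ≤ ht P x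

/-- The rank of `A` in the Catalan matroid: the maximum of `|A ∩ B|` over bases `B`. -/
noncomputable def catalanRank (n : ℕ) (A : Finset ℕ) : ℕ :=
  sSup {m : ℕ | ∃ B : Finset ℕ, IsDyck n B ∧ (A ∩ B).card = m}

/-- `A` is a flat of the Catalan matroid: adding any element of the ground set outside
`A` strictly increases the rank. -/
def IsCatalanFlat (n : ℕ) (A : Finset ℕ) : Prop :=
  A ⊆ Finset.Icc 1 (2 * n) ∧
  ∀ y ∈ Finset.Icc 1 (2 * n), y ∉ A → catalanRank n A < catalanRank n (insert y A)

open Finset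

lemma ht_zero (A : Finset ℕ) : ht A 0 = 0 := by simp [ht]

lemma ht_succ (A : Finset ℕ) (u : ℕ) :
    ht A (u + 1) = ht A u + (if u + 1 ∈ A then 1 else -1) := by
  unfold ht
  have h : Finset.Icc 1 (u + 1) = insert (u + 1) (Finset.Icc 1 u) := by
    ext w; simp only [mem_Icc, mem_insert]; omega
  rw [h]
  by_cases hm : u + 1 ∈ A
  · rw [Finset.inter_insert_of_mem hm,
      Finset.card_insert_of_notMem (by simp [mem_inter, mem_Icc])]
    simp [hm]; push_cast; ring
  · rw [Finset.inter_insert_of_notMem hm]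
    simp [hm]; push_cast; ring

lemma ht_mono_set {A B : Finset ℕ} (h : A ⊆ B) (u : ℕ) : ht A u ≤ ht B u := by
  unfold ht
  have := Finset.card_le_card (Finset.inter_subset_inter h (Finset.Subset.refl (Finset.Icc 1 u)))
  omega

lemma ht_insert_of_le {A : Finset ℕ} {y u : ℕ} (hy1 : 1 ≤ y) (hyu : y ≤ u) (hyA : y ∉ A) :
    ht (insert y A) u = ht A u + 2 := by
  unfold ht
  rw [Finset.insert_inter_of_mem (mem_Icc.mpr ⟨hy1, hyu⟩),
    Finset.card_insert_of_notMem (by simp [mem_inter, hyA])]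
  push_cast; ring

lemma ht_insert_of_gt {A : Finset ℕ} {y u : ℕ} (hyu : u < y) :
    ht (insert y A) u = ht A u := by
  unfold ht
  rw [Finset.insert_inter_of_notMem (by simp [mem_Icc]; omega)]

lemma exists_first_eq (A : Finset ℕ) {c : ℤ} (hc : c < 0) {x : ℕ} (h : ht A x ≤ c) :
    ∃ u, u ≤ x ∧ ht A u = c ∧ ∀ v < u, c < ht A v := by
  have hex : ∃ u, ht A u ≤ c := ⟨x, h⟩
  classical
  let u := Nat.find hex
  have hu : ht A u ≤ c := Nat.find_spec hex
  have hmin : ∀ v < u, c < ht A v := fun v hv => lt_of_not_ge (Nat.find_min hex hv)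
  have hux : u ≤ x := Nat.find_min' hex h
  have hupos : u ≠ 0 := by
    intro h0
    have := hu; rw [h0, ht_zero] at this; omega
  obtain ⟨v, hv⟩ : ∃ v, u = v + 1 := ⟨u - 1, by omega⟩
  have hprev : c < ht A v := hmin v (by omega)
  have hstep := ht_succ A v
  have hu' : ht A (v + 1) ≤ c := hv ▸ hu
  refine ⟨u, hux, ?_, hmin⟩
  rw [hv]
  by_cases hm : v + 1 ∈ A
  · rw [if_pos hm] at hstep; omega
  · rw [if_neg hm] at hstep; omega

lemma isDyck_Icc (n : ℕ) : IsDyck n (Finset.Icc 1 n) := by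
  refine ⟨Finset.Icc_subset_Icc le_rfl (by omega), by simp, ?_⟩
  intro u hu
  unfold ht
  have h : Finset.Icc 1 n ∩ Finset.Icc 1 u = Finset.Icc 1 (min n u) := by
    ext w; simp only [mem_inter, mem_Icc]; omega
  rw [h, Nat.card_Icc]
  rcases le_total n u with h' | h' <;> [rw [min_eq_left h']; rw [min_eq_right h']] <;> omega

lemma rank_bdd (n : ℕ) (A : Finset ℕ) :
    BddAbove {m : ℕ | ∃ B : Finset ℕ, IsDyck n B ∧ (A ∩ B).card = m} := by
  refine ⟨n, ?_⟩
  rintro m ⟨B, hB, rfl⟩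
  exact le_trans (Finset.card_le_card Finset.inter_subset_right) hB.2.1.le

lemma rank_nonempty (n : ℕ) (A : Finset ℕ) :
    {m : ℕ | ∃ B : Finset ℕ, IsDyck n B ∧ (A ∩ B).card = m}.Nonempty :=
  ⟨(A ∩ Finset.Icc 1 n).card, Finset.Icc 1 n, isDyck_Icc n, rfl⟩

lemma le_catalanRank {n : ℕ} {A B : Finset ℕ} (hB : IsDyck n B) :
    (A ∩ B).card ≤ catalanRank n A :=
  le_csSup (rank_bdd n A) ⟨B, hB, rfl⟩

lemma catalanRank_le {n k : ℕ} {A : Finset ℕ} (h : ∀ B, IsDyck n B → (A ∩ B).card ≤ k) :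
    catalanRank n A ≤ k :=
  csSup_le (rank_nonempty n A) (by rintro m ⟨B, hB, rfl⟩; exact h B hB)

lemma catalanRank_mono {n : ℕ} {A A' : Finset ℕ} (h : A ⊆ A') :
    catalanRank n A ≤ catalanRank n A' :=
  catalanRank_le fun B hB =>
    le_trans (Finset.card_le_card (Finset.inter_subset_inter h (Finset.Subset.refl B)))
      (le_catalanRank hB)

lemma catalanRank_ub {n x0 t : ℕ} {A : Finset ℕ} (hx0 : x0 ≤ 2 * n)
    (h : ht A x0 ≤ 1 - 2 * (t : ℤ)) : (catalanRank n A : ℤ) ≤ (n : ℤ) - t := by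
  have htn : t ≤ n := by
    have hge : -(x0 : ℤ) ≤ ht A x0 := by unfold ht; omega
    unfold ht at h; omega
  have key : ∀ B, IsDyck n B → (A ∩ B).card ≤ n - t := by
    intro B hB
    have hsub : A ∩ B ⊆ (A ∩ Finset.Icc 1 x0) ∪ (B \ Finset.Icc 1 x0) := by
      intro w hw
      rw [mem_inter] at hw
      by_cases hwx : w ∈ Finset.Icc 1 x0
      · exact mem_union_left _ (mem_inter.mpr ⟨hw.1, hwx⟩)
      · exact mem_union_right _ (mem_sdiff.mpr ⟨hw.2, hwx⟩)
    have h1 : (A ∩ B).card ≤ (A ∩ Finset.Icc 1 x0).card + (B \ Finset.Icc 1 x0).card :=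
      le_trans (Finset.card_le_card hsub) (Finset.card_union_le _ _)
    have h2 : (B ∩ Finset.Icc 1 x0).card + (B \ Finset.Icc 1 x0).card = n := by
      rw [Finset.card_inter_add_card_sdiff]; exact hB.2.1
    have h3 : 0 ≤ ht B x0 := hB.2.2 x0 hx0
    unfold ht at h h3
    omega
  have h4 := catalanRank_le key
  omega

lemma exists_dyck_subset {n : ℕ} (S : Finset ℕ) (hsub : S ⊆ Finset.Icc 1 (2 * n))
    (hht : ∀ u ≤ 2 * n, 0 ≤ ht S u) : ∃ B, IsDyck n B ∧ B ⊆ S := by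
  induction S using Finset.strongInduction with
  | _ S ih =>
    have hfull : S ∩ Finset.Icc 1 (2 * n) = S := Finset.inter_eq_left.mpr hsub
    have hcard : n ≤ S.card := by
      have h2n := hht (2 * n) le_rfl
      unfold ht at h2n; rw [hfull] at h2n; omega
    by_cases hc : S.card = n
    · exact ⟨S, ⟨hsub, hc, hht⟩, Finset.Subset.refl S⟩
    · have hne : S.Nonempty := Finset.card_pos.mp (by omega)
      set a := S.max' hne with ha
      have haS : a ∈ S := S.max'_mem hne
      have hmax : ∀ s ∈ S, s ≤ a := fun s hs => S.le_max' s hs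
      have hsub' : S.erase a ⊆ Finset.Icc 1 (2 * n) := (Finset.erase_subset a S).trans hsub
      have hht' : ∀ u ≤ 2 * n, 0 ≤ ht (S.erase a) u := by
        intro u hu
        by_cases hua : a ≤ u
        · have h1 : S ∩ Finset.Icc 1 u = S := Finset.inter_eq_left.mpr (fun s hs =>
            mem_Icc.mpr ⟨(mem_Icc.mp (hsub hs)).1, le_trans (hmax s hs) hua⟩)
          have h2 : S.erase a ∩ Finset.Icc 1 u = S.erase a := Finset.inter_eq_left.mpr
            (fun s hs => by
              have hs' := Finset.erase_subset a S hs
              exact mem_Icc.mpr ⟨(mem_Icc.mp (hsub hs')).1, le_trans (hmax s hs') hua⟩)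
          unfold ht
          rw [h2, Finset.card_erase_of_mem haS]
          omega
        · have h2 : S.erase a ∩ Finset.Icc 1 u = S ∩ Finset.Icc 1 u := by
            ext w
            simp only [mem_inter, Finset.mem_erase, mem_Icc]
            constructor
            · rintro ⟨⟨_, hw⟩, hw2⟩; exact ⟨hw, hw2⟩
            · rintro ⟨hw, hw2⟩; exact ⟨⟨by omega, hw⟩, hw2⟩
          unfold ht; rw [h2]
          exact hht u hu
      obtain ⟨B, hB, hBS⟩ := ih (S.erase a) (Finset.erase_ssubset haS) hsub' hht'
      exact ⟨B, hB, hBS.trans (Finset.erase_subset a S)⟩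

lemma rank_ge_of_nonneg {n : ℕ} {A : Finset ℕ} (hsub : A ⊆ Finset.Icc 1 (2 * n))
    (h : ∀ u ≤ 2 * n, 0 ≤ ht A u) : n ≤ catalanRank n A := by
  obtain ⟨B, hB, hBA⟩ := exists_dyck_subset A hsub h
  have heq : A ∩ B = B := Finset.inter_eq_right.mpr hBA
  have := le_catalanRank (A := A) hB
  rw [heq, hB.2.1] at this
  exact this

lemma rank_ge_of_ge_neg2 {n : ℕ} {A : Finset ℕ} (hsub : A ⊆ Finset.Icc 1 (2 * n))
    (h : ∀ u ≤ 2 * n, -2 ≤ ht A u) : (n : ℤ) - 1 ≤ catalanRank n A := by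
  by_cases hall : ∀ u ≤ 2 * n, 0 ≤ ht A u
  · have := rank_ge_of_nonneg hsub hall; omega
  · push_neg at hall
    obtain ⟨u, hu, hneg⟩ := hall
    obtain ⟨u0, hu0x, hu0eq, hu0min⟩ := exists_first_eq A (show (-1 : ℤ) < 0 by norm_num)
      (show ht A u ≤ -1 by omega)
    have hu0pos : u0 ≠ 0 := by
      intro h0; rw [h0, ht_zero] at hu0eq; omega
    obtain ⟨v, rfl⟩ : ∃ v, u0 = v + 1 := ⟨u0 - 1, by omega⟩
    have hvnn : 0 ≤ ht A v := by have := hu0min v (by omega); omega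
    have hnm : v + 1 ∉ A := by
      intro hmem
      have := ht_succ A v
      rw [if_pos hmem] at this; omega
    have hS'sub : insert (v + 1) A ⊆ Finset.Icc 1 (2 * n) :=
      Finset.insert_subset (mem_Icc.mpr ⟨by omega, by omega⟩) hsub
    have hS'ht : ∀ w ≤ 2 * n, 0 ≤ ht (insert (v + 1) A) w := by
      intro w hw
      by_cases hcase : v + 1 ≤ w
      · rw [ht_insert_of_le (by omega) hcase hnm]
        have := h w hw; omega
      · rw [ht_insert_of_gt (by omega)]
        have := hu0min w (by omega); omega
    obtain ⟨B, hB, hBS⟩ := exists_dyck_subset _ hS'sub hS'ht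
    have hdiff : B \ A ⊆ {v + 1} := by
      intro w hw
      rw [mem_sdiff] at hw
      have := hBS hw.1
      rw [Finset.mem_insert] at this
      simp only [Finset.mem_singleton]
      tauto
    have h4 : (B \ A).card ≤ 1 := le_trans (Finset.card_le_card hdiff) (by simp)
    have h5 : (B ∩ A).card + (B \ A).card = B.card := Finset.card_inter_add_card_sdiff _ _
    have h6 := le_catalanRank (A := A) hB
    rw [Finset.inter_comm] at h6
    have h7 := hB.2.1
    omega

lemma flat_tail {n : ℕ} {A : Finset ℕ} (hA : IsCatalanFlat n A) {t w : ℕ}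
    (hw : w ≤ 2 * n) (hhw : ht A w ≤ 1 - 2 * (t : ℤ))
    (hr : (n : ℤ) - t ≤ catalanRank n A) {z : ℕ}
    (hz : z ∈ Finset.Icc 1 (2 * n)) (hzw : w < z) : z ∈ A := by
  by_contra hzA
  have hlt := hA.2 z hz hzA
  have hub : (catalanRank n (insert z A) : ℤ) ≤ (n : ℤ) - t :=
    catalanRank_ub hw (by rw [ht_insert_of_gt hzw]; exact hhw)
  omega


/-- Let `A` be a flat of the Catalan matroid of rank `n − 2`, and let `x` be the
smallest integer with `ht_A(x) = −1`.  Then the number of rank-`(n−1)` flats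
containing `A` is exactly `(x + 3)/2` (stated as: twice the number equals `x + 3`). -/
theorem catalan_flat_cover_count (n : ℕ) (hn : 0 < n) (A : Finset ℕ)
    (hA : IsCatalanFlat n A) (hrank : (catalanRank n A : ℤ) = (n : ℤ) - 2)
    (x : ℕ) (hx : x ≤ 2 * n) (hhx : ht A x = -1) (hxmin : ∀ y < x, ht A y ≠ -1) :
    2 * {F : Finset ℕ | IsCatalanFlat n F ∧ (catalanRank n F : ℤ) = (n : ℤ) - 1 ∧
          A ⊆ F}.ncard = x + 3 := by
  obtain ⟨hAsub, hAflat⟩ := hA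
  have hn2 : 2 ≤ n := by
    have : (0 : ℤ) ≤ (catalanRank n A : ℤ) := Int.natCast_nonneg _
    omega
  have hxpos : 1 ≤ x := by
    rcases Nat.eq_zero_or_pos x with h0 | h; · rw [h0, ht_zero] at hhx; omega
    exact h
  -- Step 1 : heights before x are nonnegative
  have step1 : ∀ u < x, 0 ≤ ht A u := by
    intro u hu
    by_contra hneg
    push_neg at hneg
    obtain ⟨u', hu'le, hu'eq, _⟩ := exists_first_eq A (show (-1 : ℤ) < 0 by norm_num)
      (show ht A u ≤ -1 by omega)
    exact hxmin u' (lt_of_le_of_lt hu'le hu) hu'eq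
  -- Step 3 : heights are at least -4 everywhere
  have step3 : ∀ u ≤ 2 * n, -4 ≤ ht A u := by
    intro u hu
    by_contra hneg
    push_neg at hneg
    obtain ⟨u', hle, heq, _⟩ := exists_first_eq A (show (-5 : ℤ) < 0 by norm_num)
      (show ht A u ≤ -5 by omega)
    have := catalanRank_ub (n := n) (A := A) (x0 := u') (t := 3) (le_trans hle hu)
      (by rw [heq]; norm_num)
    omega
  -- Step 2 : the first point xm with height -3
  have hnot : ¬ ∀ u ≤ 2 * n, -2 ≤ ht A u := by
    intro hall
    have := rank_ge_of_ge_neg2 hAsub hall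
    omega
  push_neg at hnot
  obtain ⟨u1, hu1, hu1lt⟩ := hnot
  obtain ⟨xm, hxmle, hxm_eq, hxm_min⟩ := exists_first_eq A (show (-3 : ℤ) < 0 by norm_num)
    (show ht A u1 ≤ -3 by omega)
  have hxm2n : xm ≤ 2 * n := le_trans hxmle hu1
  have step2 : ∀ u < xm, -2 ≤ ht A u := fun u hu => by have := hxm_min u hu; omega
  have hxxm : x < xm := by
    rcases lt_trichotomy x xm with h | h | h
    · exact h
    · rw [h, hxm_eq] at hhx; omega
    · have := step1 xm h; omega
  have hxA : x ∉ A := by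
    intro hmem
    obtain ⟨v, rfl⟩ : ∃ v, x = v + 1 := ⟨x - 1, by omega⟩
    have hstep := ht_succ A v
    rw [if_pos hmem] at hstep
    have := step1 v (by omega)
    omega
  have tailA : ∀ z ∈ Finset.Icc 1 (2 * n), xm < z → z ∈ A := by
    intro z hz hzx
    exact flat_tail ⟨hAsub, hAflat⟩ (t := 2) hxm2n (by rw [hxm_eq]; norm_num)
      (by omega) hz hzx
  -- the special hyperplane Fx
  set Fx : Finset ℕ := (A ∩ Finset.Icc 1 x) ∪ Finset.Icc (x + 1) (2 * n) with hFxdef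
  have hFx_inter : ∀ u ≤ x, Fx ∩ Finset.Icc 1 u = A ∩ Finset.Icc 1 u := by
    intro u hu
    ext w
    simp only [hFxdef, mem_inter, mem_union, mem_Icc]
    constructor
    · rintro ⟨h1 | h1, h2⟩
      · exact ⟨h1.1, h2⟩
      · omega
    · rintro ⟨h1, h2⟩
      exact ⟨Or.inl ⟨h1, by omega⟩, h2⟩
  have hFx_ht_le : ∀ u ≤ x, ht Fx u = ht A u := by
    intro u hu; unfold ht; rw [hFx_inter u hu]
  have hcA : 2 * ((A ∩ Finset.Icc 1 x).card : ℤ) = (x : ℤ) - 1 := by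
    unfold ht at hhx; omega
  have hFx_ht_gt : ∀ u, x < u → u ≤ 2 * n → ht Fx u = (u : ℤ) - x - 1 := by
    intro u hu1 hu2
    have hsplit : Fx ∩ Finset.Icc 1 u = (A ∩ Finset.Icc 1 x) ∪ Finset.Icc (x + 1) u := by
      ext w
      simp only [hFxdef, mem_inter, mem_union, mem_Icc]
      constructor
      · rintro ⟨h1 | h1, h2⟩
        · exact Or.inl h1
        · exact Or.inr ⟨h1.1, by omega⟩
      · rintro (h1 | h1)
        · have := mem_Icc.mp (hAsub h1.1)
          exact ⟨Or.inl h1, by omega⟩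
        · exact ⟨Or.inr ⟨h1.1, by omega⟩, by omega⟩
    have hdisj : Disjoint (A ∩ Finset.Icc 1 x) (Finset.Icc (x + 1) u) := by
      rw [Finset.disjoint_left]
      intro w hw hw'
      have := (mem_Icc.mp (mem_inter.mp hw).2).2
      have := (mem_Icc.mp hw').1
      omega
    unfold ht
    rw [hsplit, Finset.card_union_of_disjoint hdisj, Nat.card_Icc]
    push_cast
    omega
  have hFx_sub : Fx ⊆ Finset.Icc 1 (2 * n) := by
    apply Finset.union_subset
    · exact Finset.inter_subset_left.trans hAsub
    · exact Finset.Icc_subset_Icc (by omega) le_rfl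
  have hAFx : A ⊆ Fx := by
    intro a ha
    have haI := mem_Icc.mp (hAsub ha)
    by_cases hax : a ≤ x
    · exact mem_union_left _ (mem_inter.mpr ⟨ha, mem_Icc.mpr ⟨haI.1, hax⟩⟩)
    · exact mem_union_right _ (mem_Icc.mpr ⟨by omega, haI.2⟩)
  have hFx_ge1 : ∀ u ≤ 2 * n, -1 ≤ ht Fx u := by
    intro u hu
    rcases lt_trichotomy u x with h | h | h
    · rw [hFx_ht_le u h.le]; have := step1 u h; omega
    · rw [h, hFx_ht_le x le_rfl, hhx]
    · rw [hFx_ht_gt u h hu]; omega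
  have hFx_rank : (catalanRank n Fx : ℤ) = (n : ℤ) - 1 := by
    have hub : (catalanRank n Fx : ℤ) ≤ (n : ℤ) - 1 :=
      catalanRank_ub (t := 1) hx (by rw [hFx_ht_le x le_rfl, hhx]; norm_num)
    have hlb := rank_ge_of_ge_neg2 hFx_sub (fun u hu => by have := hFx_ge1 u hu; omega)
    omega
  have hFx_flat : IsCatalanFlat n Fx := by
    refine ⟨hFx_sub, ?_⟩
    intro z hz hzF
    have hzIcc := mem_Icc.mp hz
    have hzx : z ≤ x := by
      by_contra h
      push_neg at h
      exact hzF (mem_union_right _ (mem_Icc.mpr ⟨by omega, hzIcc.2⟩))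
    have hins : ∀ u ≤ 2 * n, 0 ≤ ht (insert z Fx) u := by
      intro u hu
      by_cases hcz : z ≤ u
      · rw [ht_insert_of_le hzIcc.1 hcz hzF]
        have := hFx_ge1 u hu; omega
      · rw [ht_insert_of_gt (by omega)]
        rw [hFx_ht_le u (by omega)]
        exact step1 u (by omega)
    have hge := rank_ge_of_nonneg (Finset.insert_subset hz hFx_sub) hins
    omega
  -- the key computation : inserting two small elements reaches rank n
  have key0 : ∀ y ∈ Finset.Icc 1 x, y ∉ A → ∀ z ∈ Finset.Icc 1 (2 * n),
      z ∉ insert y A → z ≤ xm → n ≤ catalanRank n (insert z (insert y A)) := by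
    intro y hy hyA z hz hzG hzxm
    have hyIcc := mem_Icc.mp hy
    have hzIcc := mem_Icc.mp hz
    have hzA : z ∉ A := fun h => hzG (Finset.mem_insert_of_mem h)
    have hsub2 : insert z (insert y A) ⊆ Finset.Icc 1 (2 * n) :=
      Finset.insert_subset hz (Finset.insert_subset (mem_Icc.mpr ⟨hyIcc.1, by omega⟩) hAsub)
    apply rank_ge_of_nonneg hsub2
    intro u hu
    have hins1 : ht (insert y A) u = ht A u + (if y ≤ u then 2 else 0) := by
      by_cases h1 : y ≤ u
      · rw [ht_insert_of_le hyIcc.1 h1 hyA, if_pos h1]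
      · rw [ht_insert_of_gt (by omega), if_neg h1]; ring
    have hins2 : ht (insert z (insert y A)) u
        = ht (insert y A) u + (if z ≤ u then 2 else 0) := by
      by_cases h2 : z ≤ u
      · rw [ht_insert_of_le hzIcc.1 h2 hzG, if_pos h2]
      · rw [ht_insert_of_gt (by omega), if_neg h2]; ring
    rw [hins2, hins1]
    by_cases h1 : y ≤ u <;> by_cases h2 : z ≤ u
    · rw [if_pos h1, if_pos h2]; have := step3 u hu; omega
    · rw [if_pos h1, if_neg h2]; have := step2 u (by omega); omega
    · rw [if_neg h1, if_pos h2]; have := step1 u (by omega); omega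
    · rw [if_neg h1, if_neg h2]; have := step1 u (by omega); omega
  -- the hyperplanes insert y A
  have hG : ∀ y ∈ Finset.Icc 1 x, y ∉ A →
      IsCatalanFlat n (insert y A) ∧ (catalanRank n (insert y A) : ℤ) = (n : ℤ) - 1 := by
    intro y hy hyA
    have hyIcc := mem_Icc.mp hy
    have hGsub : insert y A ⊆ Finset.Icc 1 (2 * n) :=
      Finset.insert_subset (mem_Icc.mpr ⟨hyIcc.1, by omega⟩) hAsub
    have hub : (catalanRank n (insert y A) : ℤ) ≤ (n : ℤ) - 1 :=
      catalanRank_ub (t := 1) hxm2n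
        (by rw [ht_insert_of_le hyIcc.1 (by omega) hyA, hxm_eq]; norm_num)
    have hge : ∀ u ≤ 2 * n, -2 ≤ ht (insert y A) u := by
      intro u hu
      by_cases hc : y ≤ u
      · rw [ht_insert_of_le hyIcc.1 hc hyA]; have := step3 u hu; omega
      · rw [ht_insert_of_gt (by omega)]; have := step1 u (by omega); omega
    have hlb := rank_ge_of_ge_neg2 hGsub hge
    have hrk : (catalanRank n (insert y A) : ℤ) = (n : ℤ) - 1 := by omega
    refine ⟨⟨hGsub, ?_⟩, hrk⟩
    intro z hz hzG
    have hzxm : z ≤ xm := by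
      by_contra h
      push_neg at h
      exact hzG (Finset.mem_insert_of_mem (tailA z hz h))
    have := key0 y hy hyA z hz hzG hzxm
    omega
  -- completeness
  have complete : ∀ F : Finset ℕ, IsCatalanFlat n F → (catalanRank n F : ℤ) = (n : ℤ) - 1 →
      A ⊆ F → F = Fx ∨ ∃ y, y ∈ Finset.Icc 1 x ∧ y ∉ A ∧ F = insert y A := by
    intro F hFflat hFrank hAF
    obtain ⟨hFsub, hFfl⟩ := hFflat
    have hnot0 : ¬ ∀ u ≤ 2 * n, 0 ≤ ht F u := by
      intro hall
      have := rank_ge_of_nonneg hFsub hall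
      omega
    push_neg at hnot0
    obtain ⟨u2, hu2, hu2neg⟩ := hnot0
    obtain ⟨z, hzle, hzeq, hzmin⟩ := exists_first_eq F (show (-1 : ℤ) < 0 by norm_num)
      (show ht F u2 ≤ -1 by omega)
    have hz2n : z ≤ 2 * n := le_trans hzle hu2
    have hxz : x ≤ z := by
      by_contra h
      push_neg at h
      have h1 := ht_mono_set hAF z
      rw [hzeq] at h1
      have := step1 z h
      omega
    have tailF : ∀ w ∈ Finset.Icc 1 (2 * n), z < w → w ∈ F := by
      intro w hw hzw
      exact flat_tail ⟨hFsub, hFfl⟩ (t := 1) hz2n (by rw [hzeq]; norm_num)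
        (by omega) hw hzw
    have hsubx : A ∩ Finset.Icc 1 x ⊆ F ∩ Finset.Icc 1 x :=
      Finset.inter_subset_inter hAF (Finset.Subset.refl _)
    by_cases hcc : (F ∩ Finset.Icc 1 x).card ≤ (A ∩ Finset.Icc 1 x).card
    · left
      have heqx : A ∩ Finset.Icc 1 x = F ∩ Finset.Icc 1 x :=
        Finset.eq_of_subset_of_card_le hsubx hcc
      have hhtF : ht F x = -1 := by
        unfold ht at hhx ⊢; rw [← heqx]; exact hhx
      have hzx : z = x := by
        have : ¬ x < z := fun h => by have := hzmin x h; omega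
        omega
      ext w
      constructor
      · intro hwF
        have hw := mem_Icc.mp (hFsub hwF)
        by_cases hwx : w ≤ x
        · exact mem_union_left _ (heqx ▸ mem_inter.mpr ⟨hwF, mem_Icc.mpr ⟨hw.1, hwx⟩⟩)
        · exact mem_union_right _ (mem_Icc.mpr ⟨by omega, hw.2⟩)
      · intro hwFx
        rcases mem_union.mp hwFx with h | h
        · rw [heqx] at h; exact (mem_inter.mp h).1
        · have hwI := mem_Icc.mp h
          exact tailF w (mem_Icc.mpr ⟨by omega, hwI.2⟩) (by omega)
    · right
      push_neg at hcc
      have hnsub : ¬ F ∩ Finset.Icc 1 x ⊆ A ∩ Finset.Icc 1 x := fun h => by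
        have := Finset.card_le_card h; omega
      obtain ⟨y, hyF', hyA'⟩ := Finset.not_subset.mp hnsub
      have hyFm : y ∈ F := (mem_inter.mp hyF').1
      have hyIcc : y ∈ Finset.Icc 1 x := (mem_inter.mp hyF').2
      have hyA : y ∉ A := fun h => hyA' (mem_inter.mpr ⟨h, hyIcc⟩)
      refine ⟨y, hyIcc, hyA, ?_⟩
      apply Finset.Subset.antisymm
      · intro w hwF
        by_contra hwG
        have hw := hFsub hwF
        have hwxm : w ≤ xm := by
          by_contra h
          push_neg at h
          exact hwG (Finset.mem_insert_of_mem (tailA w hw h))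
        have hrge := key0 y hyIcc hyA w hw hwG hwxm
        have hmono : catalanRank n (insert w (insert y A)) ≤ catalanRank n F :=
          catalanRank_mono (Finset.insert_subset hwF (Finset.insert_subset hyFm hAF))
        omega
      · exact Finset.insert_subset hyFm hAF
  -- the set of hyperplanes over A
  have hset : {F : Finset ℕ | IsCatalanFlat n F ∧ (catalanRank n F : ℤ) = (n : ℤ) - 1 ∧
      A ⊆ F} = insert Fx ((fun y => insert y A) '' ↑(Finset.Icc 1 x \ A)) := by
    ext F
    simp only [Set.mem_setOf_eq, Set.mem_insert_iff, Set.mem_image, Finset.coe_sdiff,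
      Set.mem_diff, Finset.mem_coe, Finset.mem_sdiff]
    constructor
    · rintro ⟨h1, h2, h3⟩
      rcases complete F h1 h2 h3 with h | ⟨y, hy1, hy2, h⟩
      · exact Or.inl h
      · exact Or.inr ⟨y, ⟨hy1, hy2⟩, h.symm⟩
    · rintro (rfl | ⟨y, ⟨hy1, hy2⟩, rfl⟩)
      · exact ⟨hFx_flat, hFx_rank, hAFx⟩
      · obtain ⟨hf, hr⟩ := hG y hy1 hy2
        exact ⟨hf, hr, Finset.subset_insert _ _⟩
  rw [hset]
  have hnotmem : Fx ∉ (fun y => insert y A) '' ↑(Finset.Icc 1 x \ A) := by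
    rintro ⟨y, hy, heq⟩
    rw [Finset.mem_coe, Finset.mem_sdiff] at hy
    have h1 : (insert y A) ∩ Finset.Icc 1 x = insert y (A ∩ Finset.Icc 1 x) :=
      Finset.insert_inter_of_mem hy.1
    have h2 : Fx ∩ Finset.Icc 1 x = (insert y A) ∩ Finset.Icc 1 x := by
      rw [show insert y A = Fx from heq]
    rw [hFx_inter x le_rfl, h1] at h2
    have h3 := congrArg Finset.card h2
    rw [Finset.card_insert_of_notMem (fun h => hy.2 (mem_inter.mp h).1)] at h3
    omega
  have hinj : Set.InjOn (fun y => insert y A) ↑(Finset.Icc 1 x \ A) := by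
    intro y hy y' hy' h
    rw [Finset.mem_coe, Finset.mem_sdiff] at hy hy'
    have h'' : insert y A = insert y' A := h
    have : y ∈ insert y' A := h'' ▸ Finset.mem_insert_self y A
    rcases Finset.mem_insert.mp this with h' | h'
    · exact h'
    · exact absurd h' hy.2
  rw [Set.ncard_insert_of_notMem hnotmem ((Finset.Icc 1 x \ A).finite_toSet.image _),
    Set.ncard_image_of_injOn hinj, Set.ncard_coe_finset]
  have hsd : (Finset.Icc 1 x \ A).card = x - (A ∩ Finset.Icc 1 x).card := by
    have h1 : Finset.Icc 1 x \ A = Finset.Icc 1 x \ (Finset.Icc 1 x ∩ A) :=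
      (Finset.sdiff_inter_self_left _ _).symm
    rw [h1, Finset.card_sdiff_of_subset Finset.inter_subset_left, Nat.card_Icc,
      Finset.inter_comm]
    omega
  have hle : (A ∩ Finset.Icc 1 x).card ≤ x := by omega
  omega
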